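/- Let R be a commutative ring and a,b,c,d,z ∈ R, and set q = abcd. Define T_M = Σ_{t=0}^{⌊M/2⌋} Φ_{M−2t, 2t}(a,b,c,d) · z^t · q^{C(t,2)} (where C(t,2) = t(t−1)/2), U_N = T_{2N} and V_N = T_{2N+1}. Then for every integer N ≥ 1: U_{N+1} = (1 + ab + ac(1+bd)q^{N−1}z)·U_N − a(b − zq^{N−1})(1 − czq^{N−1})·U_{N−1}, and V_{N+1} = (1 + ab + (1+ac)zq^N)·V_N − a(b − zq^N)(1 − czq^{N−1})·V_{N−1}. -/

import Mathlib

open scoped BigOperators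

/-- A partition: a weakly decreasing sequence of nonnegative integers (0-indexed:
`parts i` is λ_{i+1}) with finitely many nonzero terms. -/
structure IntPartition where
  parts : ℕ → ℕ
  antitone : Antitone parts
  fin_support : ∃ N, ∀ n, N ≤ n → parts n = 0

namespace IntPartition

/-- Σ_{i≥1} ⌈λ_{2i-1}/2⌉ (odd-indexed rows, 1-based; ceiling). -/
noncomputable def statA (l : IntPartition) : ℕ := ∑ᶠ i : ℕ, (l.parts (2 * i) + 1) / 2
/-- Σ_{i≥1} ⌊λ_{2i-1}/2⌋. -/
noncomputable def statB (l : IntPartition) : ℕ := ∑ᶠ i : ℕ, l.parts (2 * i) / 2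
/-- Σ_{i≥1} ⌈λ_{2i}/2⌉. -/
noncomputable def statC (l : IntPartition) : ℕ := ∑ᶠ i : ℕ, (l.parts (2 * i + 1) + 1) / 2
/-- Σ_{i≥1} ⌊λ_{2i}/2⌋. -/
noncomputable def statD (l : IntPartition) : ℕ := ∑ᶠ i : ℕ, l.parts (2 * i + 1) / 2

/-- ℓ(λ): the number of nonzero parts. -/
noncomputable def length (l : IntPartition) : ℕ := Set.ncard (Function.support l.parts)

/-- |λ|: the sum of all parts. -/
noncomputable def size (l : IntPartition) : ℕ := ∑ᶠ i : ℕ, l.parts i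

/-- A partition is strict if its nonzero parts are pairwise distinct. -/
def Strict (l : IntPartition) : Prop := ∀ i, l.parts (i + 1) ≠ 0 → l.parts (i + 1) < l.parts i

/-- The Andrews–Stanley four-parameter weight ω(λ). -/
noncomputable def weight {R : Type*} [CommRing R] (a b c d : R) (l : IntPartition) : R :=
  a ^ l.statA * b ^ l.statB * c ^ l.statC * d ^ l.statD

/-- O(λ): the number of odd parts. -/
noncomputable def oddParts (l : IntPartition) : ℕ := Set.ncard {i : ℕ | Odd (l.parts i)}

/-- O(λ'): the number of odd parts of the conjugate partition. -/
noncomputable def conjOddParts (l : IntPartition) : ℕ :=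
  Set.ncard {j : ℕ | Odd (Set.ncard {i : ℕ | j + 1 ≤ l.parts i})}

end IntPartition

/-- The q-shifted factorial (x;q)_n. -/
def poch {R : Type*} [CommRing R] (x q : R) (n : ℕ) : R :=
  ∏ k ∈ Finset.range n, (1 - x * q ^ k)

/-- The infinite q-shifted factorial (x;q)_∞ (as an infinite product of reals). -/
noncomputable def pochInf (x q : ℝ) : ℝ := ∏' k : ℕ, (1 - x * q ^ k)

/-- The basic hypergeometric series ₂φ₁(α,β;γ;q,w). -/
noncomputable def phi21 (α β γ q w : ℝ) : ℝ :=
  ∑' n : ℕ, poch α q n * poch β q n / (poch q q n * poch γ q n) * w ^ n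

/-- Absolute convergence of the ₂φ₁ series. -/
def phi21Summable (α β γ q w : ℝ) : Prop :=
  Summable (fun n : ℕ => poch α q n * poch β q n / (poch q q n * poch γ q n) * w ^ n)

/-- The Gaussian binomial coefficient [N choose k]_q. -/
noncomputable def gauss {K : Type*} [Field K] (q : K) (N k : ℕ) : K :=
  poch q q N / (poch q q k * poch q q (N - k))

/-- Ψ_N(a,b,c,d;z): the generating function of strict partitions with parts ≤ N. -/
noncomputable def Psi {R : Type*} [CommRing R] (a b c d z : R) (N : ℕ) : R :=
  ∑ᶠ μ : {μ : IntPartition // μ.Strict ∧ μ.parts 0 ≤ N},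
    IntPartition.weight a b c d μ.1 * z ^ μ.1.length

/-- Φ_{N,M}(a,b,c,d): the sum of ω(λ) over partitions λ with at most M parts,
each part ≤ N. -/
noncomputable def PhiNM {R : Type*} [CommRing R] (a b c d : R) (N M : ℕ) : R :=
  ∑ᶠ l : {l : IntPartition // l.parts 0 ≤ N ∧ l.length ≤ M},
    IntPartition.weight a b c d l.1

/-- T_M = Σ_{t=0}^{⌊M/2⌋} Φ_{M−2t,2t}(a,b,c,d) z^t q^{C(t,2)}. -/
noncomputable def TGen {R : Type*} [CommRing R] (a b c d z : R) (M : ℕ) : R :=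
  ∑ t ∈ Finset.range (M / 2 + 1),
    PhiNM a b c d (M - 2 * t) (2 * t) * z ^ t * (a * b * c * d) ^ (t.choose 2)

namespace ASaux

open IntPartition Finset

lemma IntPartition.ext' {l m : IntPartition} (h : l.parts = m.parts) : l = m := by
  cases l; cases m; simpa using h

lemma finsum_eq_range {f : ℕ → ℕ} {B : ℕ} (h : ∀ i, B ≤ i → f i = 0) :
    ∑ᶠ i, f i = ∑ i ∈ Finset.range B, f i := by
  apply finsum_eq_finset_sum_of_support_subset
  intro i hi
  simp only [Finset.coe_range, Set.mem_Iio]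
  by_contra hc
  exact hi (h i (by omega))

lemma length_eq_of_iff (l : IntPartition) (n : ℕ) (h : ∀ i, l.parts i ≠ 0 ↔ i < n) :
    l.length = n := by
  have hs : Function.support l.parts = Set.Iio n := by
    ext i; simpa using h i
  rw [IntPartition.length, hs, ← Finset.coe_range, Set.ncard_coe_finset, Finset.card_range]

lemma support_finite (l : IntPartition) : (Function.support l.parts).Finite := by
  obtain ⟨B, hB⟩ := l.fin_support
  apply (Set.finite_Iio B).subset
  intro i hi
  simp only [Set.mem_Iio]
  by_contra hc
  exact hi (hB i (by omega))

lemma parts_ne_zero_iff (l : IntPartition) (i : ℕ) : l.parts i ≠ 0 ↔ i < l.length := by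
  constructor
  · intro h
    have hsub : Set.Iic i ⊆ Function.support l.parts := by
      intro k hk
      have := l.antitone (Set.mem_Iic.mp hk)
      simp only [Function.mem_support]
      omega
    have h2 := Set.ncard_le_ncard hsub (support_finite l)
    rw [← Finset.coe_Iic, Set.ncard_coe_finset, Nat.card_Iic] at h2
    rw [IntPartition.length]
    omega
  · intro h hc
    have hsub : Function.support l.parts ⊆ Set.Iio i := by
      intro k hk
      simp only [Function.mem_support] at hk
      simp only [Set.mem_Iio]
      by_contra hk2
      have := l.antitone (show i ≤ k by omega)
      omega
    have := Set.ncard_le_ncard hsub (Set.finite_Iio i)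
    rw [← Finset.coe_range, Set.ncard_coe_finset, Finset.card_range] at this
    rw [IntPartition.length] at h
    omega

/-- drop the first row -/
def shiftP (l : IntPartition) : IntPartition where
  parts := fun i => l.parts (i + 1)
  antitone := fun i j hij => l.antitone (by omega)
  fin_support := by
    obtain ⟨B, hB⟩ := l.fin_support
    exact ⟨B, fun n hn => hB _ (by omega)⟩

lemma length_shiftP (l : IntPartition) : (shiftP l).length = l.length - 1 := by
  apply length_eq_of_iff
  intro i
  rw [show (shiftP l).parts i = l.parts (i+1) from rfl, parts_ne_zero_iff]
  omega

/-- prepend a row -/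
def consP (j : ℕ) (l : IntPartition) (h : l.parts 0 ≤ j) : IntPartition where
  parts := fun i => match i with | 0 => j | (k+1) => l.parts k
  antitone := by
    apply antitone_nat_of_succ_le
    intro n
    match n with
    | 0 => exact h
    | (k+1) => exact l.antitone (Nat.le_succ k)
  fin_support := by
    obtain ⟨B, hB⟩ := l.fin_support
    refine ⟨B + 1, fun n hn => ?_⟩
    match n, hn with
    | (k+1), hn => exact hB k (by omega)

@[simp] lemma consP_parts_zero (j : ℕ) (l : IntPartition) (h : l.parts 0 ≤ j) :
    (consP j l h).parts 0 = j := rfl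

@[simp] lemma consP_parts_succ (j : ℕ) (l : IntPartition) (h : l.parts 0 ≤ j) (i : ℕ) :
    (consP j l h).parts (i + 1) = l.parts i := rfl

lemma length_consP (j : ℕ) (l : IntPartition) (h : l.parts 0 ≤ j) :
    (consP j l h).length = if j = 0 then 0 else l.length + 1 := by
  split_ifs with hj
  · apply length_eq_of_iff
    intro i
    match i with
    | 0 => simp [hj]
    | (k+1) =>
      simp only [consP_parts_succ]
      have := l.antitone (Nat.zero_le k)
      omega
  · apply length_eq_of_iff
    intro i
    match i with
    | 0 => simp [hj]
    | (k+1) =>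
      simp only [consP_parts_succ, parts_ne_zero_iff]
      omega

end ASaux
namespace ASaux
open IntPartition Finset

-- compute the four statistics of `consP j l h`

lemma statC_consP (j : ℕ) (l : IntPartition) (h : l.parts 0 ≤ j) :
    (consP j l h).statC = l.statA := by
  apply finsum_congr
  intro i
  rfl

lemma statD_consP (j : ℕ) (l : IntPartition) (h : l.parts 0 ≤ j) :
    (consP j l h).statD = l.statB := by
  apply finsum_congr
  intro i
  rfl

lemma statA_consP (j : ℕ) (l : IntPartition) (h : l.parts 0 ≤ j) :
    (consP j l h).statA = (j + 1) / 2 + l.statC := by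
  obtain ⟨B, hB⟩ := l.fin_support
  rw [IntPartition.statA, IntPartition.statC]
  rw [finsum_eq_range (f := fun i => ((consP j l h).parts (2 * i) + 1) / 2) (B := B + 1)
    (by
      intro i hi
      have e : 2 * i = (2 * i - 1) + 1 := by omega
      rw [e, consP_parts_succ, hB _ (by omega)]),
    finsum_eq_range (f := fun i => (l.parts (2 * i + 1) + 1) / 2) (B := B)
    (by intro i hi; rw [hB _ (by omega)])]
  rw [Finset.sum_range_succ']
  have e2 : ∀ i : ℕ, ((consP j l h).parts (2 * (i + 1)) + 1) / 2 = (l.parts (2 * i + 1) + 1) / 2 := by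
    intro i
    have e : 2 * (i + 1) = (2 * i + 1) + 1 := by omega
    rw [e, consP_parts_succ]
  simp only [e2]
  rw [consP_parts_zero]
  ring

lemma statB_consP (j : ℕ) (l : IntPartition) (h : l.parts 0 ≤ j) :
    (consP j l h).statB = j / 2 + l.statD := by
  obtain ⟨B, hB⟩ := l.fin_support
  rw [IntPartition.statB, IntPartition.statD]
  rw [finsum_eq_range (f := fun i => (consP j l h).parts (2 * i) / 2) (B := B + 1)
    (by
      intro i hi
      have e : 2 * i = (2 * i - 1) + 1 := by omega
      rw [e, consP_parts_succ, hB _ (by omega)]),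
    finsum_eq_range (f := fun i => l.parts (2 * i + 1) / 2) (B := B)
    (by intro i hi; rw [hB _ (by omega)])]
  rw [Finset.sum_range_succ']
  have e2 : ∀ i : ℕ, (consP j l h).parts (2 * (i + 1)) / 2 = l.parts (2 * i + 1) / 2 := by
    intro i
    have e : 2 * (i + 1) = (2 * i + 1) + 1 := by omega
    rw [e, consP_parts_succ]
  simp only [e2]
  rw [consP_parts_zero]
  ring

lemma weight_consP {R : Type*} [CommRing R] (a b c d : R) (j : ℕ) (l : IntPartition)
    (h : l.parts 0 ≤ j) :
    IntPartition.weight a b c d (consP j l h) =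
      a ^ ((j + 1) / 2) * b ^ (j / 2) * IntPartition.weight c d a b l := by
  rw [IntPartition.weight, IntPartition.weight, statA_consP, statB_consP, statC_consP,
    statD_consP, pow_add, pow_add]
  ring

/-- the zero partition -/
def zeroP : IntPartition := ⟨fun _ => 0, fun _ _ _ => le_rfl, ⟨0, fun _ _ => rfl⟩⟩

@[simp] lemma zeroP_parts (i : ℕ) : zeroP.parts i = 0 := rfl

lemma zeroP_length : zeroP.length = 0 :=
  length_eq_of_iff _ 0 (by simp)

lemma eq_zeroP_of (l : IntPartition) (h : l.parts 0 = 0) : l = zeroP := by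
  apply IntPartition.ext'
  funext i
  have := l.antitone (Nat.zero_le i)
  simp only [zeroP_parts]
  omega

lemma weight_zeroP {R : Type*} [CommRing R] (a b c d : R) :
    IntPartition.weight a b c d zeroP = 1 := by
  simp [IntPartition.weight, IntPartition.statA, IntPartition.statB, IntPartition.statC,
    IntPartition.statD]

end ASaux
namespace ASaux
open IntPartition Finset

lemma finite_aux (N M : ℕ) : Finite {l : IntPartition // l.parts 0 ≤ N ∧ l.length ≤ M} := by
  apply Finite.of_injective (fun l : {l : IntPartition // l.parts 0 ≤ N ∧ l.length ≤ M} =>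
    (fun i : Fin M => (⟨l.1.parts i,
      Nat.lt_succ_of_le (le_trans (l.1.antitone (Nat.zero_le _)) l.2.1)⟩ : Fin (N + 1))))
  rintro ⟨l, hl1, hl2⟩ ⟨m, hm1, hm2⟩ hf
  apply Subtype.ext
  apply IntPartition.ext'
  funext i
  by_cases hi : i < M
  · have := congrFun hf ⟨i, hi⟩
    simpa using this
  · have h1 : l.parts i = 0 := by
      by_contra hc
      have := (parts_ne_zero_iff l i).mp hc
      omega
    have h2 : m.parts i = 0 := by
      by_contra hc
      have := (parts_ne_zero_iff m i).mp hc
      omega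
    rw [h1, h2]

lemma PhiNM_right_zero {R : Type*} [CommRing R] (a b c d : R) (N : ℕ) :
    PhiNM a b c d N 0 = 1 := by
  rw [PhiNM]
  have hz : zeroP.parts 0 ≤ N ∧ zeroP.length ≤ 0 := by
    simp [zeroP_length]
  letI : Unique {l : IntPartition // l.parts 0 ≤ N ∧ l.length ≤ 0} := ⟨⟨⟨zeroP, hz⟩⟩, by
    rintro ⟨l, h1, h2⟩
    apply Subtype.ext
    apply eq_zeroP_of
    by_contra hc
    have := (parts_ne_zero_iff l 0).mp hc
    omega⟩
  rw [finsum_unique]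
  show IntPartition.weight a b c d zeroP = 1
  exact weight_zeroP a b c d

lemma PhiNM_left_zero {R : Type*} [CommRing R] (a b c d : R) (M : ℕ) :
    PhiNM a b c d 0 M = 1 := by
  rw [PhiNM]
  have hz : zeroP.parts 0 ≤ 0 ∧ zeroP.length ≤ M := by
    simp [zeroP_length]
  letI : Unique {l : IntPartition // l.parts 0 ≤ 0 ∧ l.length ≤ M} := ⟨⟨⟨zeroP, hz⟩⟩, by
    rintro ⟨l, h1, h2⟩
    apply Subtype.ext
    apply eq_zeroP_of
    exact Nat.le_zero.mp h1⟩
  rw [finsum_unique]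
  show IntPartition.weight a b c d zeroP = 1
  exact weight_zeroP a b c d

lemma keyRow {R : Type*} [CommRing R] (a b c d : R) (N M : ℕ) :
    PhiNM a b c d N (M + 1) =
      ∑ j ∈ Finset.range (N + 1), a ^ ((j + 1) / 2) * b ^ (j / 2) * PhiNM c d a b j M := by
  haveI F1 : Fintype {l : IntPartition // l.parts 0 ≤ N ∧ l.length ≤ M + 1} :=
    @Fintype.ofFinite _ (finite_aux N (M + 1))
  haveI F2 : ∀ j : ℕ, Fintype {l : IntPartition // l.parts 0 ≤ j ∧ l.length ≤ M} :=
    fun j => @Fintype.ofFinite _ (finite_aux j M)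
  let e : {l : IntPartition // l.parts 0 ≤ N ∧ l.length ≤ M + 1} ≃
      (j : Fin (N + 1)) × {μ : IntPartition // μ.parts 0 ≤ (j : ℕ) ∧ μ.length ≤ M} :=
    { toFun := fun l => ⟨⟨l.1.parts 0, Nat.lt_succ_of_le l.2.1⟩,
        ⟨shiftP l.1, ⟨l.1.antitone (Nat.zero_le 1), by
          have := l.2.2
          rw [length_shiftP]
          omega⟩⟩⟩
      invFun := fun x => ⟨consP x.1 x.2.1 x.2.2.1, ⟨by
          simpa using Nat.lt_succ_iff.mp x.1.isLt, by
          rw [length_consP]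
          split_ifs with hj
          · omega
          · exact Nat.succ_le_succ x.2.2.2⟩⟩
      left_inv := by
        rintro ⟨l, h1, h2⟩
        apply Subtype.ext
        apply IntPartition.ext'
        funext i
        cases i <;> rfl
      right_inv := by
        rintro ⟨⟨j, hj⟩, ⟨μ, hμ1, hμ2⟩⟩
        rfl }
  rw [PhiNM, finsum_eq_sum_of_fintype]
  rw [← Equiv.sum_comp e.symm (fun l => IntPartition.weight a b c d l.1)]
  rw [← Finset.univ_sigma_univ, Finset.sum_sigma]
  rw [← Fin.sum_univ_eq_sum_range]
  apply Finset.sum_congr rfl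
  intro j _
  have : ∀ x : {μ : IntPartition // μ.parts 0 ≤ (j : ℕ) ∧ μ.length ≤ M},
      IntPartition.weight a b c d (e.symm ⟨j, x⟩).1 =
        a ^ (((j : ℕ) + 1) / 2) * b ^ ((j : ℕ) / 2) * IntPartition.weight c d a b x.1 := by
    intro x
    exact weight_consP a b c d (j : ℕ) x.1 x.2.1
  rw [Finset.sum_congr rfl (fun x _ => this x)]
  rw [PhiNM, finsum_eq_sum_of_fintype, Finset.mul_sum]

end ASaux
namespace ASaux
open Finset

variable {R : Type*} [CommRing R] (a b c d z : R)

noncomputable def Hs (N M : ℕ) : R :=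
  ∑ j ∈ Finset.range (N + 1), c ^ ((j + 1) / 2) * d ^ (j / 2) * PhiNM a b c d j M

lemma key2 (N M : ℕ) : PhiNM a b c d N (M + 2) =
    ∑ j ∈ Finset.range (N + 1), a ^ ((j + 1) / 2) * b ^ (j / 2) * Hs a b c d j M := by
  rw [show M + 2 = M + 1 + 1 from rfl, keyRow]
  refine Finset.sum_congr rfl fun j hj => ?_
  rw [keyRow c d a b j M]
  rfl

lemma phi_succ (N M : ℕ) : PhiNM a b c d (N + 1) (M + 2) =
    PhiNM a b c d N (M + 2) + a ^ ((N + 2) / 2) * b ^ ((N + 1) / 2) * Hs a b c d (N + 1) M := by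
  rw [key2, key2, Finset.sum_range_succ]

lemma Hs_succ (N M : ℕ) : Hs a b c d (N + 1) M =
    Hs a b c d N M + c ^ ((N + 2) / 2) * d ^ ((N + 1) / 2) * PhiNM a b c d (N + 1) M := by
  unfold Hs
  rw [Finset.sum_range_succ]

lemma Hs_zero (M : ℕ) : Hs a b c d 0 M = 1 := by
  unfold Hs
  simp [PhiNM_left_zero]

noncomputable def UU (n : ℕ) : R := TGen a b c d z (2 * n)
noncomputable def VV (n : ℕ) : R := TGen a b c d z (2 * n + 1)
noncomputable def PP (n : ℕ) : R :=
  ∑ s ∈ Finset.range (n + 1), (a * b) ^ (n - s) * Hs a b c d (2 * n - 2 * s) (2 * s) * z ^ s *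
    (a * b * c * d) ^ ((s + 1).choose 2)
noncomputable def QQ (n : ℕ) : R :=
  ∑ s ∈ Finset.range (n + 1), (a * b) ^ (n - s) * Hs a b c d (2 * n + 1 - 2 * s) (2 * s) * z ^ s *
    (a * b * c * d) ^ ((s + 1).choose 2)

lemma UU_eq (n : ℕ) : UU a b c d z n =
    ∑ t ∈ Finset.range (n + 1),
      PhiNM a b c d (2 * n - 2 * t) (2 * t) * z ^ t * (a * b * c * d) ^ (t.choose 2) := by
  unfold UU TGen
  rw [Nat.mul_div_cancel_left n (by norm_num : 0 < 2)]

lemma VV_eq (n : ℕ) : VV a b c d z n =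
    ∑ t ∈ Finset.range (n + 1),
      PhiNM a b c d (2 * n + 1 - 2 * t) (2 * t) * z ^ t * (a * b * c * d) ^ (t.choose 2) := by
  unfold VV TGen
  rw [show (2 * n + 1) / 2 = n by omega]

end ASaux
namespace ASaux
open Finset

lemma choose_two_succ (s : ℕ) : (s + 1).choose 2 = s.choose 2 + s := by
  simp [Nat.choose_succ_succ, Nat.choose_one_right]
  omega

variable {R : Type*} [CommRing R] (a b c d z : R)

lemma rel_i (n : ℕ) :
    UU a b c d z (n + 1) = VV a b c d z n + z * PP a b c d z n := by
  have hL : (∑ t ∈ Finset.range (n + 1 + 1),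
        PhiNM a b c d (2 * (n + 1) - 2 * t) (2 * t) * z ^ t * (a * b * c * d) ^ (t.choose 2))
      = (∑ i ∈ Finset.range n,
          PhiNM a b c d (2 * (n + 1) - 2 * (i + 1)) (2 * (i + 1)) * z ^ (i + 1) *
            (a * b * c * d) ^ ((i + 1).choose 2))
        + PhiNM a b c d (2 * (n + 1) - 2 * (n + 1)) (2 * (n + 1)) * z ^ (n + 1) *
            (a * b * c * d) ^ ((n + 1).choose 2)
        + PhiNM a b c d (2 * (n + 1) - 2 * 0) (2 * 0) * z ^ 0 *
            (a * b * c * d) ^ (Nat.choose 0 2) := by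
    rw [Finset.sum_range_succ', Finset.sum_range_succ]
  have hV : (∑ t ∈ Finset.range (n + 1),
        PhiNM a b c d (2 * n + 1 - 2 * t) (2 * t) * z ^ t * (a * b * c * d) ^ (t.choose 2))
      = (∑ i ∈ Finset.range n,
          PhiNM a b c d (2 * n + 1 - 2 * (i + 1)) (2 * (i + 1)) * z ^ (i + 1) *
            (a * b * c * d) ^ ((i + 1).choose 2))
        + PhiNM a b c d (2 * n + 1 - 2 * 0) (2 * 0) * z ^ 0 *
            (a * b * c * d) ^ (Nat.choose 0 2) := by
    rw [Finset.sum_range_succ']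
  have hP : PP a b c d z n = (∑ s ∈ Finset.range n,
        (a * b) ^ (n - s) * Hs a b c d (2 * n - 2 * s) (2 * s) * z ^ s *
          (a * b * c * d) ^ ((s + 1).choose 2))
      + (a * b) ^ (n - n) * Hs a b c d (2 * n - 2 * n) (2 * n) * z ^ n *
          (a * b * c * d) ^ ((n + 1).choose 2) := by
    unfold PP
    rw [Finset.sum_range_succ]
  have hmid : (∑ i ∈ Finset.range n,
        PhiNM a b c d (2 * (n + 1) - 2 * (i + 1)) (2 * (i + 1)) * z ^ (i + 1) *
          (a * b * c * d) ^ ((i + 1).choose 2))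
      = ∑ i ∈ Finset.range n,
          (PhiNM a b c d (2 * n + 1 - 2 * (i + 1)) (2 * (i + 1)) * z ^ (i + 1) *
            (a * b * c * d) ^ ((i + 1).choose 2)
          + z * ((a * b) ^ (n - i) * Hs a b c d (2 * n - 2 * i) (2 * i) * z ^ i *
            (a * b * c * d) ^ ((i + 1).choose 2))) := by
    refine Finset.sum_congr rfl fun i hi => ?_
    have hi' := Finset.mem_range.mp hi
    obtain ⟨m, rfl⟩ : ∃ m, n = m + i + 1 := ⟨n - i - 1, by omega⟩
    rw [show 2 * (m + i + 1 + 1) - 2 * (i + 1) = (2 * m + 1) + 1 by omega,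
      show 2 * (i + 1) = 2 * i + 2 by omega,
      phi_succ,
      show 2 * (m + i + 1) + 1 - (2 * i + 2) = 2 * m + 1 by omega,
      show (2 * m + 1 + 2) / 2 = m + 1 by omega,
      show (2 * m + 1 + 1) / 2 = m + 1 by omega,
      show 2 * m + 1 + 1 = 2 * (m + i + 1) - 2 * i by omega,
      show m + i + 1 - i = m + 1 by omega]
    ring
  rw [UU_eq, VV_eq, hL, hV, hP, hmid, Finset.sum_add_distrib, ← Finset.mul_sum]
  rw [show 2 * (n + 1) - 2 * (n + 1) = 0 by omega, show 2 * n - 2 * n = 0 by omega,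
    show n - n = 0 by omega, PhiNM_left_zero, Hs_zero,
    show (2 : ℕ) * 0 = 0 by omega, PhiNM_right_zero, PhiNM_right_zero,
    show Nat.choose 0 2 = 0 from rfl]
  ring

lemma rel_ii (n : ℕ) :
    VV a b c d z (n + 1) = UU a b c d z (n + 1) + a * z * QQ a b c d z n := by
  have hL : (∑ t ∈ Finset.range (n + 1 + 1),
        PhiNM a b c d (2 * (n + 1) + 1 - 2 * t) (2 * t) * z ^ t * (a * b * c * d) ^ (t.choose 2))
      = (∑ i ∈ Finset.range (n + 1),
          PhiNM a b c d (2 * (n + 1) + 1 - 2 * (i + 1)) (2 * (i + 1)) * z ^ (i + 1) *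
            (a * b * c * d) ^ ((i + 1).choose 2))
        + PhiNM a b c d (2 * (n + 1) + 1 - 2 * 0) (2 * 0) * z ^ 0 *
            (a * b * c * d) ^ (Nat.choose 0 2) := by
    rw [Finset.sum_range_succ']
  have hU : (∑ t ∈ Finset.range (n + 1 + 1),
        PhiNM a b c d (2 * (n + 1) - 2 * t) (2 * t) * z ^ t * (a * b * c * d) ^ (t.choose 2))
      = (∑ i ∈ Finset.range (n + 1),
          PhiNM a b c d (2 * (n + 1) - 2 * (i + 1)) (2 * (i + 1)) * z ^ (i + 1) *
            (a * b * c * d) ^ ((i + 1).choose 2))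
        + PhiNM a b c d (2 * (n + 1) - 2 * 0) (2 * 0) * z ^ 0 *
            (a * b * c * d) ^ (Nat.choose 0 2) := by
    rw [Finset.sum_range_succ']
  have hmid : (∑ i ∈ Finset.range (n + 1),
        PhiNM a b c d (2 * (n + 1) + 1 - 2 * (i + 1)) (2 * (i + 1)) * z ^ (i + 1) *
          (a * b * c * d) ^ ((i + 1).choose 2))
      = ∑ i ∈ Finset.range (n + 1),
          (PhiNM a b c d (2 * (n + 1) - 2 * (i + 1)) (2 * (i + 1)) * z ^ (i + 1) *
            (a * b * c * d) ^ ((i + 1).choose 2)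
          + a * z * ((a * b) ^ (n - i) * Hs a b c d (2 * n + 1 - 2 * i) (2 * i) * z ^ i *
            (a * b * c * d) ^ ((i + 1).choose 2))) := by
    refine Finset.sum_congr rfl fun i hi => ?_
    have hi' := Finset.mem_range.mp hi
    obtain ⟨m, rfl⟩ : ∃ m, n = m + i := ⟨n - i, by omega⟩
    rw [show 2 * (m + i + 1) + 1 - 2 * (i + 1) = (2 * m) + 1 by omega,
      show 2 * (i + 1) = 2 * i + 2 by omega,
      phi_succ,
      show 2 * (m + i + 1) - (2 * i + 2) = 2 * m by omega,
      show (2 * m + 2) / 2 = m + 1 by omega,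
      show (2 * m + 1) / 2 = m by omega,
      show 2 * m + 1 = 2 * (m + i) + 1 - 2 * i by omega,
      show m + i - i = m by omega]
    ring
  rw [VV_eq, UU_eq]
  unfold QQ
  rw [hL, hU, hmid, Finset.sum_add_distrib, ← Finset.mul_sum]
  rw [show (2 : ℕ) * 0 = 0 by omega, PhiNM_right_zero, PhiNM_right_zero,
    show Nat.choose 0 2 = 0 from rfl]
  ring

lemma rel_iii (n : ℕ) :
    PP a b c d z (n + 1) = a * b * QQ a b c d z n +
      (a * b * c * d) ^ (n + 1) * UU a b c d z (n + 1) := by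
  have hP : PP a b c d z (n + 1) = (∑ s ∈ Finset.range (n + 1),
        (a * b) ^ (n + 1 - s) * Hs a b c d (2 * (n + 1) - 2 * s) (2 * s) * z ^ s *
          (a * b * c * d) ^ ((s + 1).choose 2))
      + (a * b) ^ (n + 1 - (n + 1)) * Hs a b c d (2 * (n + 1) - 2 * (n + 1)) (2 * (n + 1)) *
          z ^ (n + 1) * (a * b * c * d) ^ ((n + 1 + 1).choose 2) := by
    unfold PP
    rw [Finset.sum_range_succ]
  have hU : (∑ t ∈ Finset.range (n + 1 + 1),
        PhiNM a b c d (2 * (n + 1) - 2 * t) (2 * t) * z ^ t * (a * b * c * d) ^ (t.choose 2))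
      = (∑ t ∈ Finset.range (n + 1),
          PhiNM a b c d (2 * (n + 1) - 2 * t) (2 * t) * z ^ t * (a * b * c * d) ^ (t.choose 2))
        + PhiNM a b c d (2 * (n + 1) - 2 * (n + 1)) (2 * (n + 1)) * z ^ (n + 1) *
            (a * b * c * d) ^ ((n + 1).choose 2) := by
    rw [Finset.sum_range_succ]
  have hmid : (∑ s ∈ Finset.range (n + 1),
        (a * b) ^ (n + 1 - s) * Hs a b c d (2 * (n + 1) - 2 * s) (2 * s) * z ^ s *
          (a * b * c * d) ^ ((s + 1).choose 2))
      = ∑ s ∈ Finset.range (n + 1),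
          (a * b * ((a * b) ^ (n - s) * Hs a b c d (2 * n + 1 - 2 * s) (2 * s) * z ^ s *
            (a * b * c * d) ^ ((s + 1).choose 2))
          + (a * b * c * d) ^ (n + 1) *
            (PhiNM a b c d (2 * (n + 1) - 2 * s) (2 * s) * z ^ s *
              (a * b * c * d) ^ (s.choose 2))) := by
    refine Finset.sum_congr rfl fun s hs => ?_
    have hs' := Finset.mem_range.mp hs
    obtain ⟨m, rfl⟩ : ∃ m, n = m + s := ⟨n - s, by omega⟩
    rw [show 2 * (m + s + 1) - 2 * s = (2 * m + 1) + 1 by omega,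
      Hs_succ,
      show (2 * m + 1 + 2) / 2 = m + 1 by omega,
      show (2 * m + 1 + 1) / 2 = m + 1 by omega,
      show 2 * m + 1 = 2 * (m + s) + 1 - 2 * s by omega,
      show m + s + 1 - s = m + 1 by omega,
      show m + s - s = m by omega,
      choose_two_succ]
    ring
  rw [hP, hmid, Finset.sum_add_distrib, ← Finset.mul_sum, ← Finset.mul_sum, UU_eq, hU]
  unfold QQ
  rw [show 2 * (n + 1) - 2 * (n + 1) = 0 by omega, show n + 1 - (n + 1) = 0 by omega,
    Hs_zero, PhiNM_left_zero, choose_two_succ]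
  rw [pow_add]
  ring

lemma rel_iv (n : ℕ) :
    QQ a b c d z n = PP a b c d z n + c * (a * b * c * d) ^ n * VV a b c d z n := by
  have hmid : QQ a b c d z n
      = ∑ s ∈ Finset.range (n + 1),
          ((a * b) ^ (n - s) * Hs a b c d (2 * n - 2 * s) (2 * s) * z ^ s *
            (a * b * c * d) ^ ((s + 1).choose 2)
          + c * (a * b * c * d) ^ n *
            (PhiNM a b c d (2 * n + 1 - 2 * s) (2 * s) * z ^ s *
              (a * b * c * d) ^ (s.choose 2))) := by
    unfold QQ
    refine Finset.sum_congr rfl fun s hs => ?_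
    have hs' := Finset.mem_range.mp hs
    obtain ⟨m, rfl⟩ : ∃ m, n = m + s := ⟨n - s, by omega⟩
    rw [show 2 * (m + s) + 1 - 2 * s = (2 * m) + 1 by omega,
      Hs_succ,
      show (2 * m + 2) / 2 = m + 1 by omega,
      show (2 * m + 1) / 2 = m by omega,
      show 2 * m + 1 = 2 * (m + s) + 1 - 2 * s by omega,
      show 2 * m = 2 * (m + s) - 2 * s by omega,
      show m + s - s = m by omega,
      choose_two_succ]
    ring
  rw [hmid, Finset.sum_add_distrib, ← Finset.mul_sum, VV_eq]
  unfold PP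
  ring

lemma UU_zero : UU a b c d z 0 = 1 := by
  rw [UU_eq]
  simp [PhiNM_right_zero]

lemma UU_one : UU a b c d z 1 = 1 + z := by
  rw [UU_eq, Finset.sum_range_succ, Finset.sum_range_succ]
  rw [show 2 * 1 - 2 * 0 = 2 by omega, show (2 : ℕ) * 0 = 0 by omega,
    show 2 * 1 - 2 * 1 = 0 by omega, show (2 : ℕ) * 1 = 2 by omega,
    PhiNM_right_zero, PhiNM_left_zero,
    show Nat.choose 0 2 = 0 from rfl, show Nat.choose 1 2 = 0 from rfl]
  simp

lemma QQ_zero : QQ a b c d z 0 = 1 + c := by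
  unfold QQ
  rw [Finset.sum_range_succ]
  rw [show 2 * 0 + 1 - 2 * 0 = 0 + 1 by omega, Hs_succ,
    show ((0 : ℕ) + 2) / 2 = 1 by omega, show ((0 : ℕ) + 1) / 2 = 0 by omega,
    Hs_zero, PhiNM_right_zero, show Nat.choose 1 2 = 0 from rfl]
  simp

end ASaux
namespace ASaux
open Finset

variable {R : Type*} [CommRing R] (a b c d z : R)

lemma relA (n : ℕ) : UU a b c d z (n + 2) =
    (1 + z * (a * b * c * d) ^ (n + 1)) * UU a b c d z (n + 1) +
      a * z * (1 + b) * QQ a b c d z n := by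
  linear_combination rel_i a b c d z (n + 1) + rel_ii a b c d z n + z * rel_iii a b c d z n

lemma relB (n : ℕ) : QQ a b c d z (n + 1) =
    (a * b + a * c * z * (a * b * c * d) ^ (n + 1)) * QQ a b c d z n +
      (1 + c) * (a * b * c * d) ^ (n + 1) * UU a b c d z (n + 1) := by
  linear_combination rel_iv a b c d z (n + 1) + rel_iii a b c d z n +
    c * (a * b * c * d) ^ (n + 1) * rel_ii a b c d z n

lemma relC (n : ℕ) : VV a b c d z (n + 1) =
    (1 - c * z * (a * b * c * d) ^ n) * VV a b c d z n +
      z * (1 + a) * QQ a b c d z n := by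
  linear_combination rel_ii a b c d z n + rel_i a b c d z n - z * rel_iv a b c d z n

lemma relD (n : ℕ) : QQ a b c d z (n + 1) =
    (a * b - a * z * (a * b * c * d) ^ (n + 1)) * QQ a b c d z n +
      (1 + c) * (a * b * c * d) ^ (n + 1) * VV a b c d z (n + 1) := by
  linear_combination rel_iv a b c d z (n + 1) + rel_iii a b c d z n -
    (a * b * c * d) ^ (n + 1) * rel_ii a b c d z n

lemma goalU (n : ℕ) : UU a b c d z (n + 2) =
    (1 + a * b + a * c * (1 + b * d) * (a * b * c * d) ^ n * z) * UU a b c d z (n + 1) -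
      a * (b - z * (a * b * c * d) ^ n) * (1 - c * z * (a * b * c * d) ^ n) *
        UU a b c d z n := by
  cases n with
  | zero =>
    linear_combination relA a b c d z 0 - (a * b + a * c * z) * UU_one a b c d z +
      (a * (b - z) * (1 - c * z)) * UU_zero a b c d z +
      (a * z * (1 + b)) * QQ_zero a b c d z
  | succ m =>
    linear_combination relA a b c d z (m + 1) + a * z * (1 + b) * relB a b c d z m -
      (a * b + a * c * z * (a * b * c * d) ^ (m + 1)) * relA a b c d z m

lemma goalV (n : ℕ) : VV a b c d z (n + 2) =
    (1 + a * b + (1 + a * c) * z * (a * b * c * d) ^ (n + 1)) * VV a b c d z (n + 1) -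
      a * (b - z * (a * b * c * d) ^ (n + 1)) * (1 - c * z * (a * b * c * d) ^ n) *
        VV a b c d z n := by
  linear_combination relC a b c d z (n + 1) + z * (1 + a) * relD a b c d z n -
    (a * b - a * z * (a * b * c * d) ^ (n + 1)) * relC a b c d z n

end ASaux

theorem tGen_assoc_recurrence {R : Type*} [CommRing R] (a b c d z q : R)
    (hq : q = a * b * c * d) (U V : ℕ → R)
    (hU : ∀ n, U n = TGen a b c d z (2 * n)) (hV : ∀ n, V n = TGen a b c d z (2 * n + 1))
    (N : ℕ) (hN : 1 ≤ N) :
    U (N + 1) =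
        (1 + a * b + a * c * (1 + b * d) * q ^ (N - 1) * z) * U N -
          a * (b - z * q ^ (N - 1)) * (1 - c * z * q ^ (N - 1)) * U (N - 1) ∧
    V (N + 1) =
        (1 + a * b + (1 + a * c) * z * q ^ N) * V N -
          a * (b - z * q ^ N) * (1 - c * z * q ^ (N - 1)) * V (N - 1) := by
  subst hq
  obtain ⟨n, rfl⟩ : ∃ n, N = n + 1 := ⟨N - 1, by omega⟩
  simp only [hU, hV, Nat.add_sub_cancel]
  constructor
  · exact ASaux.goalU a b c d z n
  · exact ASaux.goalV a b c d z n
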